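/- Let p be a point in the plane and let R be a finite set of points such that every r ∈ R satisfies x_r ≠ x_p, and let q be a point with x_q ≠ x_p. Then the number of points of R lying on or inside the circle C_{p,q} equals the number of r ∈ R with x_r > x_p and x_{p,r} ≤ x_{p,q}, plus the number of r ∈ R with x_r < x_p and x_{p,r} ≥ x_{p,q}. -/

import Mathlib

open scoped Classical

/-- The point of the plane with coordinates `(a, b)`. -/
noncomputable def pt (a b : ℝ) : EuclideanSpace ℝ (Fin 2) :=
  (WithLp.equiv 2 (Fin 2 → ℝ)).symm ![a, b]

/-- For two points `a`, `b` of the plane with `x_a ≠ x_b`, the `x`-coordinate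
`x_{a,b} = (y_b² − y_a²)/(2(x_b − x_a)) + (x_a + x_b)/2` of the center, on the
`x`-axis, of the circle `C_{a,b}` passing through `a` and `b`. -/
noncomputable def xc (a b : EuclideanSpace ℝ (Fin 2)) : ℝ :=
  ((b 1) ^ 2 - (a 1) ^ 2) / (2 * (b 0 - a 0)) + (a 0 + b 0) / 2

lemma xc_mul (p r : EuclideanSpace ℝ (Fin 2)) (h : r 0 ≠ p 0) :
    2 * (r 0 - p 0) * xc p r = (r 1) ^ 2 - (p 1) ^ 2 + (r 0) ^ 2 - (p 0) ^ 2 := by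
  have : r 0 - p 0 ≠ 0 := sub_ne_zero.2 h
  unfold xc
  field_simp [xc]
  ring

lemma key (p q r : EuclideanSpace ℝ (Fin 2)) (hr : r 0 ≠ p 0) (hq : q 0 ≠ p 0) :
    (dist (pt (xc p q) 0) r ≤ dist (pt (xc p q) 0) p) ↔
      ((p 0 < r 0 ∧ xc p r ≤ xc p q) ∨ (r 0 < p 0 ∧ xc p q ≤ xc p r)) := by
  have hd : ∀ s : EuclideanSpace ℝ (Fin 2),
      dist (pt (xc p q) 0) s = Real.sqrt ((xc p q - s 0) ^ 2 + (0 - s 1) ^ 2) := by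
    intro s
    rw [EuclideanSpace.dist_eq, Fin.sum_univ_two]
    simp [pt, Real.dist_eq, sq_abs]
  rw [hd, hd, Real.sqrt_le_sqrt_iff (by positivity)]
  have hmr := xc_mul p r hr
  have hiff : ((xc p q - r 0) ^ 2 + (0 - r 1) ^ 2 ≤ (xc p q - p 0) ^ 2 + (0 - p 1) ^ 2) ↔
      2 * (r 0 - p 0) * xc p r ≤ 2 * (r 0 - p 0) * xc p q := by
    constructor <;> intro h <;> nlinarith
  rw [hiff]
  rcases hr.lt_or_gt with h0 | h0
  · constructor
    · intro h
      exact Or.inr ⟨h0, by nlinarith⟩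
    · rintro (⟨h1, _⟩ | ⟨_, h2⟩)
      · linarith
      · nlinarith
  · constructor
    · intro h
      exact Or.inl ⟨h0, by nlinarith⟩
    · rintro (⟨_, h2⟩ | ⟨h1, _⟩)
      · nlinarith
      · linarith

/-- Let `p` be a point, `R` a finite set of points all of whose `x`-coordinates
differ from `x_p`, and `q` a point with `x_q ≠ x_p`.  Then the number of points of
`R` lying on or inside the circle `C_{p,q}` equals the number of `r ∈ R` with
`x_r > x_p` and `x_{p,r} ≤ x_{p,q}`, plus the number of `r ∈ R` with `x_r < x_p`
and `x_{p,r} ≥ x_{p,q}`. -/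
theorem stmt_3 (p q : EuclideanSpace ℝ (Fin 2))
    (R : Finset (EuclideanSpace ℝ (Fin 2)))
    (hR : ∀ r ∈ R, r 0 ≠ p 0) (hq : q 0 ≠ p 0) :
    (R.filter fun r => dist (pt (xc p q) 0) r ≤ dist (pt (xc p q) 0) p).card =
      (R.filter fun r => p 0 < r 0 ∧ xc p r ≤ xc p q).card +
        (R.filter fun r => r 0 < p 0 ∧ xc p q ≤ xc p r).card := by
  classical
  rw [Finset.filter_congr (fun r hr => key p q r (hR r hr) hq), Finset.filter_or,
    Finset.card_union_of_disjoint]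
  exact Finset.disjoint_filter.2 fun r _ ⟨h1, _⟩ ⟨h2, _⟩ => absurd h1 (not_lt.2 h2.le)
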